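/- (Theorem 4.2, Eq. (37).) For every j ∈ {1,2}, every t > 0, and every x with min(v₂t, 0) < x < v₁t, one has 1_{v₂t<x<v₁t}·e^{−ξt}·λ/((v₁−v₂)(1+λt)) + sgn(v_j)·1_{0<x/v_j<t}·ξe^{−ξx/v_j}/(v_j + λx) + ξ·∫₀^t e^{−ξs}·1_{v₂s<x<v₁s}·λ/((v₁−v₂)(1+λs)) ds = p̃(x,t|v_j), i.e. the reset-renewal transform of the reset-free density λ/((v₁−v₂)(1+λs)) on (v₂s, v₁s) (plus the contribution of the atom of mass 1/(1+λs) at v_j s) equals the closed-form density p̃(x,t|v_j). -/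

import Mathlib

open MeasureTheory Real Filter Topology Set

noncomputable section

namespace TelegraphReset

open Classical in
/-- Real-valued indicator of a proposition. -/
def ind (P : Prop) : ℝ := if P then 1 else 0

/-- Generalized incomplete gamma function `Γ(0, z₀, z₁) = ∫_{z₀}^{z₁} u⁻¹ e^{-u} du`. -/
def iGamma (z₀ z₁ : ℝ) : ℝ := ∫ u in z₀..z₁, u⁻¹ * Real.exp (-u)

/-- Upper incomplete gamma function `Γ(0, a) = ∫_a^∞ u⁻¹ e^{-u} du`. -/
def uGamma (a : ℝ) : ℝ := ∫ u in Set.Ioi a, u⁻¹ * Real.exp (-u)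

/-- `τ(x,t) = (x - v₂ t)/(v₁ - v₂)`. -/
def tauF (v₁ v₂ x t : ℝ) : ℝ := (x - v₂ * t) / (v₁ - v₂)

/-- The two velocities, indexed by `1` and `2`. -/
def vel (v₁ v₂ : ℝ) : ℕ → ℝ := fun n => if n = 1 then v₁ else v₂

/-- `Γ_λ^ξ(x,t)`, defined piecewise according to the sign of `v₂`. -/
def GamL (v₁ v₂ lam xi x t : ℝ) : ℝ :=
  if v₂ < 0 then iGamma ((max (x / v₁) (x / v₂) + 1 / lam) * xi) ((t + 1 / lam) * xi)
  else iGamma ((x / v₁ + 1 / lam) * xi) ((min (x / v₂) t + 1 / lam) * xi)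

/-- `Θ_λ^ξ(x,t)`, defined piecewise according to the sign of `v₂`. -/
def Theta (v₁ v₂ lam xi x t : ℝ) : ℝ :=
  if v₂ < 0 then
    Real.exp (-(xi * max (x / v₁) (x / v₂))) / (1 + lam * max (x / v₁) (x / v₂))
      - Real.exp (-(xi * t)) / (1 + lam * t)
  else
    Real.exp (-(xi * (x / v₁))) / (1 + lam * (x / v₁))
      - Real.exp (-(xi * min (x / v₂) t)) / (1 + lam * min (x / v₂) t)

/-- Closed-form sub-density `P_{j,j}(x,t)` (Eq. (21)). -/
def Pss (v₁ v₂ lam xi : ℝ) (j : ℕ) (x t : ℝ) : ℝ :=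
  ind (v₂ * t < x ∧ x < v₁ * t) * Real.exp (-(xi * t)) * lam ^ 2 *
      tauF v₁ v₂ x t ^ (2 - j) * (t - tauF v₁ v₂ x t) ^ (j - 1) /
      ((v₁ - v₂) * (1 + lam * t) ^ 2)
  + Real.sign (vel v₁ v₂ j) * ind (0 < x / vel v₁ v₂ j ∧ x / vel v₁ v₂ j < t) * xi *
      Real.exp (-(xi * (x / vel v₁ v₂ j))) / (vel v₁ v₂ j + lam * x)
  + ind (min (v₂ * t) 0 < x ∧ x < v₁ * t) *
      ((-1 : ℝ) ^ (3 - j) * (xi * (vel v₁ v₂ (3 - j) + lam * x) / (v₁ - v₂) ^ 2) *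
          Theta v₁ v₂ lam xi x t
        + (-1 : ℝ) ^ j * (xi * Real.exp (xi / lam) / (v₁ - v₂) ^ 2) *
            (vel v₁ v₂ (3 - j) * (lam + xi) / lam + x * xi) * GamL v₁ v₂ lam xi x t)

/-- Closed-form sub-density `P_{3-j,j}(x,t)` (Eq. (22)). -/
def Pos (v₁ v₂ lam xi : ℝ) (j : ℕ) (x t : ℝ) : ℝ :=
  ind (v₂ * t < x ∧ x < v₁ * t) * Real.exp (-(xi * t)) * lam *
      (1 + lam * tauF v₁ v₂ x t ^ (j - 1) * (t - tauF v₁ v₂ x t) ^ (2 - j)) /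
      ((v₁ - v₂) * (1 + lam * t) ^ 2)
  + ind (min (v₂ * t) 0 < x ∧ x < v₁ * t) *
      ((-1 : ℝ) ^ j * (xi * (vel v₁ v₂ (3 - j) + lam * x) / (v₁ - v₂) ^ 2) *
          Theta v₁ v₂ lam xi x t
        + (-1 : ℝ) ^ (3 - j) * (xi * Real.exp (xi / lam) / (v₁ - v₂) ^ 2) *
            (vel v₁ v₂ j * (lam + xi) / lam + x * xi
              + (-1 : ℝ) ^ j * xi * (v₁ - v₂) / lam) * GamL v₁ v₂ lam xi x t)

/-- Closed-form reset density `p̃(x,t|v_j)` (Eq. (37)). -/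
def pTil (v₁ v₂ lam xi : ℝ) (j : ℕ) (x t : ℝ) : ℝ :=
  Real.sign (vel v₁ v₂ j) * ind (0 < x / vel v₁ v₂ j ∧ x / vel v₁ v₂ j < t) * xi *
      Real.exp (-(xi * (x / vel v₁ v₂ j))) / (vel v₁ v₂ j + lam * x)
  + ind (v₂ * t < x ∧ x < v₁ * t) * lam * Real.exp (-(xi * t)) /
      ((v₁ - v₂) * (1 + lam * t))
  + ind (min (v₂ * t) 0 < x ∧ x < v₁ * t) *
      (xi * Real.exp (xi / lam) / (v₁ - v₂)) * GamL v₁ v₂ lam xi x t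

/-- First moment `E_j[X̃(t)]` (Eq. (54)). -/
def Emom (v₁ v₂ lam xi : ℝ) (j : ℕ) (t : ℝ) : ℝ :=
  (1 - Real.exp (-(xi * t))) *
      ((v₁ + v₂) / (2 * xi) + (vel v₁ v₂ j - vel v₁ v₂ (3 - j)) / (2 * lam))
  - xi * Real.exp (xi / lam) * (vel v₁ v₂ j - vel v₁ v₂ (3 - j)) / (2 * lam ^ 2) *
      iGamma (xi / lam) (xi / lam * (1 + lam * t))
  + t * Real.exp (-(xi * t)) * (vel v₁ v₂ j - vel v₁ v₂ (3 - j)) / (2 * (1 + lam * t))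

/-- Second moment `E_j[X̃²(t)]` (Eq. (55)). -/
def Smom (v₁ v₂ lam xi : ℝ) (j : ℕ) (t : ℝ) : ℝ :=
  (1 - Real.exp (-(xi * t))) *
      (2 * (v₁ ^ 2 + v₁ * v₂ + v₂ ^ 2) / (3 * xi ^ 2)
        + (2 * vel v₁ v₂ j ^ 2 - v₁ * v₂ - vel v₁ v₂ (3 - j) ^ 2) / (3 * lam) *
            (1 / xi - 1 / lam))
  - t * Real.exp (-(xi * t)) *
      (2 * (v₁ ^ 2 + v₁ * v₂ + v₂ ^ 2) / (3 * xi)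
        + (2 * vel v₁ v₂ j ^ 2 - v₁ * v₂ - vel v₁ v₂ (3 - j) ^ 2) /
            (3 * lam * (1 + lam * t)))
  + xi * Real.exp (xi / lam) *
      (2 * vel v₁ v₂ j ^ 2 - v₁ * v₂ - vel v₁ v₂ (3 - j) ^ 2) / (3 * lam ^ 3) *
      iGamma (xi / lam) (xi / lam * (1 + lam * t))

/-- First moment of the reset-free process. -/
def m1 (v₁ v₂ lam : ℝ) (j : ℕ) (t : ℝ) : ℝ :=
  (v₁ + v₂) * t / 2 + (vel v₁ v₂ j - vel v₁ v₂ (3 - j)) * t / (2 * (1 + lam * t))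

/-- Second moment of the reset-free process (Eq. (63)). -/
def m2 (v₁ v₂ lam : ℝ) (j : ℕ) (t : ℝ) : ℝ :=
  t ^ 2 * (3 * vel v₁ v₂ j ^ 2 + lam * t * (v₁ ^ 2 + v₁ * v₂ + v₂ ^ 2)) /
    (3 * (1 + lam * t))



private lemma integrand_eq {lam xi : ℝ} (hlam : 0 < lam) (hxi : 0 < xi) {v₁ v₂ : ℝ}
    (hv : v₁ - v₂ ≠ 0) (s : ℝ) :
    Real.exp (-(xi * s)) * lam / ((v₁ - v₂) * (1 + lam * s))
      = Real.exp (xi / lam) / (v₁ - v₂) *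
        (xi * ((xi * s + xi / lam)⁻¹ * Real.exp (-(xi * s + xi / lam)))) := by
  rcases eq_or_ne (1 + lam * s) 0 with h | h
  · have hz : xi * s + xi / lam = 0 := by
      field_simp
      linear_combination xi * h
    rw [hz, h]; simp
  · have he : xi * s + xi / lam = xi * (1 + lam * s) / lam := by
      field_simp; ring
    rw [show -(xi * s + xi / lam) = -(xi * s) + -(xi / lam) by ring, Real.exp_add,
      Real.exp_neg (xi / lam), he]
    have hexp : Real.exp (xi / lam) ≠ 0 := Real.exp_ne_zero _
    field_simp

private lemma integral_g {lam xi : ℝ} (hlam : 0 < lam) (hxi : 0 < xi) {v₁ v₂ : ℝ}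
    (hv : v₁ - v₂ ≠ 0) (a b : ℝ) :
    (∫ s in a..b, Real.exp (-(xi * s)) * lam / ((v₁ - v₂) * (1 + lam * s)))
      = Real.exp (xi / lam) / (v₁ - v₂) * iGamma ((a + 1 / lam) * xi) ((b + 1 / lam) * xi) := by
  rw [intervalIntegral.integral_congr (g := fun s => Real.exp (xi / lam) / (v₁ - v₂) *
      (xi * ((xi * s + xi / lam)⁻¹ * Real.exp (-(xi * s + xi / lam)))))
      (fun s _ => integrand_eq hlam hxi hv s)]
  rw [intervalIntegral.integral_const_mul, intervalIntegral.integral_const_mul]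
  have hc := intervalIntegral.integral_comp_mul_add (a := a) (b := b)
      (f := fun u => u⁻¹ * Real.exp (-u)) hxi.ne' (xi / lam)
  simp only [smul_eq_mul] at hc
  rw [hc]
  unfold iGamma
  rw [show xi * a + xi / lam = (a + 1 / lam) * xi by ring,
    show xi * b + xi / lam = (b + 1 / lam) * xi by ring,
    ← mul_assoc xi, mul_inv_cancel₀ hxi.ne', one_mul]

private lemma g_intable {lam xi : ℝ} (hlam : 0 < lam) {v₁ v₂ : ℝ} (hv : v₁ - v₂ ≠ 0)
    {a b : ℝ} (ha : 0 ≤ a) (hb : 0 ≤ b) :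
    IntervalIntegrable
      (fun s => Real.exp (-(xi * s)) * lam / ((v₁ - v₂) * (1 + lam * s))) volume a b := by
  apply ContinuousOn.intervalIntegrable
  apply ContinuousOn.div
  · exact ((Real.continuous_exp.comp (by continuity)).mul continuous_const).continuousOn
  · exact (continuous_const.mul
      (continuous_const.add (continuous_const.mul continuous_id))).continuousOn
  · intro s hs
    have hs0 : 0 ≤ s := le_trans (le_min ha hb) hs.1
    have : 0 < 1 + lam * s := by nlinarith
    exact mul_ne_zero hv this.ne'

private lemma integral_ind_mul (cond : ℝ → Prop) (g : ℝ → ℝ) {t a b : ℝ}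
    (ha : 0 ≤ a) (hab : a ≤ b) (hbt : b ≤ t)
    (h1 : ∀ s ∈ Set.Ioc 0 a, ¬ cond s)
    (h2 : ∀ s ∈ Set.Ioo a b, cond s)
    (h3 : ∀ s ∈ Set.Ioc b t, ¬ cond s)
    (hg : IntervalIntegrable g volume a b) :
    (∫ s in (0:ℝ)..t, ind (cond s) * g s) = ∫ s in a..b, g s := by
  set F : ℝ → ℝ := fun s => ind (cond s) * g s with hF
  have hbne : ∀ᵐ s : ℝ, s ≠ b := by rw [ae_iff]; simpa using measure_singleton b
  have e1ae : ∀ᵐ s : ℝ, s ∈ Set.uIoc (0:ℝ) a → F s = 0 := by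
    refine ae_of_all _ fun s hs => ?_
    rw [uIoc_of_le ha] at hs
    simp [hF, ind, h1 s hs]
  have e2ae : ∀ᵐ s : ℝ, s ∈ Set.uIoc a b → F s = g s := by
    filter_upwards [hbne] with s hsne hs
    rw [uIoc_of_le hab] at hs
    simp [hF, ind, h2 s ⟨hs.1, lt_of_le_of_ne hs.2 hsne⟩]
  have e3ae : ∀ᵐ s : ℝ, s ∈ Set.uIoc b t → F s = 0 := by
    refine ae_of_all _ fun s hs => ?_
    rw [uIoc_of_le hbt] at hs
    simp [hF, ind, h3 s hs]
  have i1 : IntervalIntegrable F volume 0 a :=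
    (intervalIntegrable_const (c := (0:ℝ))).congr_ae
      ((ae_restrict_iff' measurableSet_uIoc).mpr
        (by filter_upwards [e1ae] with s h hs; exact (h hs).symm))
  have i2 : IntervalIntegrable F volume a b :=
    hg.congr_ae ((ae_restrict_iff' measurableSet_uIoc).mpr
      (by filter_upwards [e2ae] with s h hs; exact (h hs).symm))
  have i3 : IntervalIntegrable F volume b t :=
    (intervalIntegrable_const (c := (0:ℝ))).congr_ae
      ((ae_restrict_iff' measurableSet_uIoc).mpr
        (by filter_upwards [e3ae] with s h hs; exact (h hs).symm))
  have e1 : ∫ s in (0:ℝ)..a, F s = 0 := by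
    rw [intervalIntegral.integral_congr_ae (g := fun _ => (0:ℝ)) e1ae]
    simp
  have e2 : ∫ s in a..b, F s = ∫ s in a..b, g s :=
    intervalIntegral.integral_congr_ae e2ae
  have e3 : ∫ s in b..t, F s = 0 := by
    rw [intervalIntegral.integral_congr_ae (g := fun _ => (0:ℝ)) e3ae]
    simp
  have s1 := intervalIntegral.integral_add_adjacent_intervals i2 i3
  have s2 := intervalIntegral.integral_add_adjacent_intervals i1 (i2.trans i3)
  show ∫ s in (0:ℝ)..t, F s = _
  rw [← s2, ← s1, e1, e2, e3]
  ring

/-- Theorem 4.2, Eq. (37): the reset-renewal transform of the reset-free density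
(plus the atom contribution) equals the closed-form density `p̃(x,t|v_j)`. -/
theorem eq37 (v₁ v₂ lam xi : ℝ) (hlam : 0 < lam) (hxi : 0 < xi)
    (hv : v₂ < v₁) (hv1 : v₁ ≠ 0) (hv2 : v₂ ≠ 0)
    (hcase : (v₂ < 0 ∧ 0 < v₁) ∨ (0 < v₂ ∧ v₂ < v₁)) :
    ∀ j : ℕ, (j = 1 ∨ j = 2) → ∀ t : ℝ, 0 < t → ∀ x : ℝ,
      min (v₂ * t) 0 < x → x < v₁ * t →
      ind (v₂ * t < x ∧ x < v₁ * t) * Real.exp (-(xi * t)) * lam /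
          ((v₁ - v₂) * (1 + lam * t))
      + Real.sign (vel v₁ v₂ j) * ind (0 < x / vel v₁ v₂ j ∧ x / vel v₁ v₂ j < t) * xi *
          Real.exp (-(xi * (x / vel v₁ v₂ j))) / (vel v₁ v₂ j + lam * x)
      + xi * ∫ s in (0:ℝ)..t,
          Real.exp (-(xi * s)) * ind (v₂ * s < x ∧ x < v₁ * s) * lam /
            ((v₁ - v₂) * (1 + lam * s))
      = pTil v₁ v₂ lam xi j x t := by
  intro j hj t ht x hx1 hx2
  have hvne : v₁ - v₂ ≠ 0 := sub_ne_zero.mpr (ne_of_gt hv)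
  have hind : ind (min (v₂ * t) 0 < x ∧ x < v₁ * t) = 1 := by simp [ind, hx1, hx2]
  rcases hcase with ⟨hv2n, hv1p⟩ | ⟨hv2p, _⟩
  · -- case v₂ < 0 < v₁
    set a := max (x / v₁) (x / v₂) with hadef
    have hvt : v₂ * t < x := by
      have hmin : min (v₂ * t) 0 = v₂ * t := min_eq_left (by nlinarith)
      rwa [hmin] at hx1
    have ha0 : 0 ≤ a := by
      rcases le_or_gt 0 x with h | h
      · exact le_max_of_le_left (div_nonneg h hv1p.le)
      · exact le_max_of_le_right (div_pos_of_neg_of_neg h hv2n).le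
    have hat : a ≤ t := by
      apply max_le
      · exact ((div_lt_iff₀ hv1p).mpr (by linarith)).le
      · exact ((div_lt_iff_of_neg hv2n).mpr (by linarith)).le
    have hcond : ∀ s : ℝ, (v₂ * s < x ∧ x < v₁ * s) ↔ a < s := by
      intro s
      constructor
      · rintro ⟨hA, hB⟩
        exact max_lt ((div_lt_iff₀ hv1p).mpr (by linarith))
          ((div_lt_iff_of_neg hv2n).mpr (by linarith))
      · intro h
        have hA := (div_lt_iff₀ hv1p).mp (lt_of_le_of_lt (le_max_left _ _) h)
        have hB := (div_lt_iff_of_neg hv2n).mp (lt_of_le_of_lt (le_max_right _ _) h)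
        exact ⟨by linarith, by linarith⟩
    have hI : (∫ s in (0:ℝ)..t,
        Real.exp (-(xi * s)) * ind (v₂ * s < x ∧ x < v₁ * s) * lam /
          ((v₁ - v₂) * (1 + lam * s)))
        = Real.exp (xi / lam) / (v₁ - v₂) *
            iGamma ((a + 1 / lam) * xi) ((t + 1 / lam) * xi) := by
      rw [intervalIntegral.integral_congr (g := fun s => ind (v₂ * s < x ∧ x < v₁ * s) *
          (Real.exp (-(xi * s)) * lam / ((v₁ - v₂) * (1 + lam * s)))) (fun s _ => by ring)]
      rw [integral_ind_mul _ _ ha0 hat le_rfl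
        (fun s hs => by rw [hcond]; exact not_lt.mpr hs.2)
        (fun s hs => (hcond s).mpr hs.1)
        (fun s hs => absurd (hs.1.trans_le hs.2) (lt_irrefl t))
        (g_intable hlam hvne ha0 (le_trans ha0 hat))]
      exact integral_g hlam hxi hvne a t
    rw [hI]
    unfold pTil GamL
    rw [if_pos hv2n, hind, ← hadef]
    ring
  · -- case 0 < v₂
    have hv1p : 0 < v₁ := hv2p.trans hv
    have hx0 : 0 < x := by
      have hmin : min (v₂ * t) 0 = 0 := min_eq_right (mul_pos hv2p ht).le
      rwa [hmin] at hx1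
    set a := x / v₁ with hadef
    set b := min (x / v₂) t with hbdef
    have ha0 : 0 ≤ a := (div_pos hx0 hv1p).le
    have hab : a ≤ b := by
      apply le_min
      · rw [div_le_div_iff₀ hv1p hv2p]
        nlinarith
      · exact ((div_le_iff₀ hv1p).mpr (by linarith))
    have hbt : b ≤ t := min_le_right _ _
    have hcond : ∀ s : ℝ, (v₂ * s < x ∧ x < v₁ * s) ↔ (a < s ∧ s < x / v₂) := by
      intro s
      rw [hadef, div_lt_iff₀ hv1p, lt_div_iff₀ hv2p]
      constructor
      · rintro ⟨hA, hB⟩; exact ⟨by linarith, by linarith⟩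
      · rintro ⟨hA, hB⟩; exact ⟨by linarith, by linarith⟩
    have hI : (∫ s in (0:ℝ)..t,
        Real.exp (-(xi * s)) * ind (v₂ * s < x ∧ x < v₁ * s) * lam /
          ((v₁ - v₂) * (1 + lam * s)))
        = Real.exp (xi / lam) / (v₁ - v₂) *
            iGamma ((a + 1 / lam) * xi) ((b + 1 / lam) * xi) := by
      rw [intervalIntegral.integral_congr (g := fun s => ind (v₂ * s < x ∧ x < v₁ * s) *
          (Real.exp (-(xi * s)) * lam / ((v₁ - v₂) * (1 + lam * s)))) (fun s _ => by ring)]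
      rw [integral_ind_mul _ _ ha0 hab hbt
        (fun s hs => by rw [hcond]; rintro ⟨h, -⟩; exact absurd hs.2 (not_le.mpr h))
        (fun s hs => (hcond s).mpr ⟨hs.1, lt_of_lt_of_le hs.2 (min_le_left _ _)⟩)
        (fun s hs => by
          rw [hcond]
          rintro ⟨-, h2⟩
          rcases le_total (x / v₂) t with h | h
          · rw [hbdef, min_eq_left h] at hs
            exact absurd h2 (not_lt.mpr hs.1.le)
          · rw [hbdef, min_eq_right h] at hs
            exact absurd (hs.1.trans_le hs.2) (lt_irrefl t))
        (g_intable hlam hvne ha0 (le_trans ha0 hab))]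
      exact integral_g hlam hxi hvne a b
    rw [hI]
    unfold pTil GamL
    rw [if_neg (not_lt.mpr hv2p.le), hind, ← hadef, ← hbdef]
    ring


end TelegraphReset
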